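/- (Lemma of Section 2.4, q-case: q-factorial moments of the negative q-binomial distribution of the second kind.) Let n ≥ 1 be a natural number, β ∈ (0,1) and m ∈ ℕ. Then the series ∑_{t=0}^{∞} [t]_{m,q} · C_q(n+t−1, t) · β^{t} · ⟨1⊖β⟩_{n} converges, with sum equal to [n+m−1]_{m,q} · β^{m} / ∏_{i=1}^{m} (1 − β·q^{n+i−1}). -/

import Mathlib

open Finset

/-- q-integer `[k]_q = (1 - q^k)/(1 - q)`. -/
noncomputable def qInt (q : ℝ) (k : ℤ) : ℝ := (1 - q ^ k) / (1 - q)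

/-- q-factorial `[n]_q! = ∏_{i=1}^n [i]_q`. -/
noncomputable def qFact (q : ℝ) (n : ℕ) : ℝ := ∏ i ∈ Finset.Icc 1 n, qInt q (i : ℤ)

/-- q-binomial coefficient `C_q(n,k)`. -/
noncomputable def qBinom (q : ℝ) (n k : ℕ) : ℝ := qFact q n / (qFact q k * qFact q (n - k))

/-- q-falling factorial `[u]_{m,q} = ∏_{i=1}^m [u-i+1]_q`. -/
noncomputable def qFall (q : ℝ) (u : ℤ) (m : ℕ) : ℝ := ∏ i ∈ Finset.Icc 1 m, qInt q (u - (i : ℤ) + 1)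

/-- `[k]_{q⁻¹} = q^{1-k} · [k]_q`. -/
noncomputable def qIntInv (q : ℝ) (k : ℤ) : ℝ := q ^ (1 - k) * qInt q k

/-- `[u]_{m,q⁻¹} = ∏_{i=1}^m [u-i+1]_{q⁻¹}`. -/
noncomputable def qFallInv (q : ℝ) (u : ℤ) (m : ℕ) : ℝ := ∏ i ∈ Finset.Icc 1 m, qIntInv q (u - (i : ℤ) + 1)

/-- `b(k) = k(k-1)/2`. -/
def bb (k : ℕ) : ℕ := k * (k - 1) / 2

/-- `⟨1 ⊕ α⟩_m = ∏_{i=1}^m (1 + α q^{i-1})`. -/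
noncomputable def oplus (q α : ℝ) (m : ℕ) : ℝ := ∏ i ∈ Finset.Icc 1 m, (1 + α * q ^ (i - 1))

/-- `⟨1 ⊖ β⟩_m = ∏_{i=1}^m (1 - β q^{i-1})`. -/
noncomputable def ominus (q β : ℝ) (m : ℕ) : ℝ := ∏ i ∈ Finset.Icc 1 m, (1 - β * q ^ (i - 1))

/-- q-trinomial coefficient `T_q(n; x₁, x₂)`. -/
noncomputable def qTri (q : ℝ) (n x1 x2 : ℕ) : ℝ :=
  qFact q n / (qFact q x1 * qFact q x2 * qFact q (n - x1 - x2))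

variable {q β : ℝ}

lemma qInt_nat (n : ℕ) : qInt q (n : ℤ) = (1 - q ^ n) / (1 - q) := by
  simp [qInt, zpow_natCast]

lemma qInt_nat_pos (hq0 : 0 < q) (hq1 : q < 1) {i : ℕ} (hi : 1 ≤ i) :
    0 < qInt q (i : ℤ) := by
  rw [qInt_nat]
  have h1 : q ^ i < 1 := pow_lt_one₀ hq0.le hq1 (by omega)
  have h2 : 0 < 1 - q ^ i := by linarith
  have h3 : 0 < 1 - q := by linarith
  positivity

lemma qInt_nat_one_le (hq0 : 0 < q) (hq1 : q < 1) {i : ℕ} (hi : 1 ≤ i) :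
    1 ≤ qInt q (i : ℤ) := by
  rw [qInt_nat, le_div_iff₀ (by linarith)]
  have : q ^ i ≤ q ^ 1 := pow_le_pow_of_le_one hq0.le hq1.le hi
  simp only [pow_one] at this; nlinarith

lemma qInt_nat_le (hq0 : 0 < q) (hq1 : q < 1) (i : ℕ) :
    qInt q (i : ℤ) ≤ 1 / (1 - q) := by
  rw [qInt_nat]
  apply div_le_div_of_nonneg_right ?_ (by linarith)
  have : 0 ≤ q ^ i := by positivity
  linarith

lemma qFact_pos (hq0 : 0 < q) (hq1 : q < 1) (n : ℕ) : 0 < qFact q n :=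
  Finset.prod_pos fun i hi => qInt_nat_pos hq0 hq1 (mem_Icc.mp hi).1

lemma qFact_one_le (hq0 : 0 < q) (hq1 : q < 1) (n : ℕ) : 1 ≤ qFact q n := by
  have : (1:ℝ) = ∏ _i ∈ Finset.Icc 1 n, (1:ℝ) := by simp
  rw [this]
  exact Finset.prod_le_prod (by norm_num)
    fun i hi => qInt_nat_one_le hq0 hq1 (mem_Icc.mp hi).1

lemma qFact_zero : qFact q 0 = 1 := by simp [qFact]

lemma qFact_succ (n : ℕ) : qFact q (n + 1) = qFact q n * qInt q ((n : ℤ) + 1) := by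
  rw [qFact, Finset.prod_Icc_succ_top (by omega)]
  push_cast
  rfl

lemma qInt_add (N s : ℕ) :
    qInt q ((N : ℤ) + (s : ℤ)) = qInt q N + q ^ N * qInt q s := by
  have : ((N : ℤ) + (s : ℤ)) = ((N + s : ℕ) : ℤ) := by push_cast; ring
  rw [this, qInt_nat, qInt_nat, qInt_nat, pow_add]
  by_cases h : (1 : ℝ) - q = 0
  · simp [h]
  · field_simp
    ring

/-- Pascal recurrence -/
lemma qBinom_pascal (hq0 : 0 < q) (hq1 : q < 1) (M s : ℕ) :
    qBinom q (M + 1 + s + 1) (s + 1)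
      = q ^ (M + 1) * qBinom q (M + 1 + s) s + qBinom q (M + 1 + s) (s + 1) := by
  have h1 : M + 1 + s + 1 - (s + 1) = M + 1 := by omega
  have h2 : M + 1 + s - s = M + 1 := by omega
  have h3 : M + 1 + s - (s + 1) = M := by omega
  rw [qBinom, qBinom, qBinom, h1, h2, h3]
  have e1 : qFact q (M + 1 + s + 1) = qFact q (M + 1 + s) * qInt q ((M:ℤ) + 1 + s + 1) := by
    rw [show M + 1 + s + 1 = (M + 1 + s) + 1 from rfl, qFact_succ]
    push_cast; ring_nf
  have e2 : qFact q (s + 1) = qFact q s * qInt q ((s:ℤ) + 1) := qFact_succ s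
  have e3 : qFact q (M + 1) = qFact q M * qInt q ((M:ℤ) + 1) := qFact_succ M
  have e4 : qInt q ((M:ℤ) + 1 + s + 1) = qInt q ((M+1 : ℕ) : ℤ) + q ^ (M+1) * qInt q ((s+1 : ℕ) : ℤ) := by
    have := qInt_add (q := q) (M + 1) (s + 1)
    rw [← this]; push_cast; ring_nf
  have p1 := (qFact_pos hq0 hq1 (M + 1 + s)).ne'
  have p2 := (qFact_pos hq0 hq1 s).ne'
  have p3 := (qFact_pos hq0 hq1 M).ne'
  have p4 := (qInt_nat_pos hq0 hq1 (i := s + 1) (by omega)).ne'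
  have p5 := (qInt_nat_pos hq0 hq1 (i := M + 1) (by omega)).ne'
  rw [e1, e2, e3, e4]
  push_cast at *
  field_simp
  ring

lemma qFact_Ioc (n : ℕ) : qFact q n = ∏ i ∈ Finset.Ioc 0 n, qInt q (i : ℤ) := by
  rw [qFact, ← Finset.Icc_add_one_left_eq_Ioc]
  rfl

lemma qBinom_bound (hq0 : 0 < q) (hq1 : q < 1) (M s : ℕ) :
    qBinom q (M + s) s ≤ (1 / (1 - q)) ^ M := by
  have h1 : M + s - s = M := by omega
  rw [qBinom, h1]
  have hsplit : qFact q (M + s) = qFact q s * ∏ i ∈ Finset.Ioc s (M + s), qInt q (i : ℤ) := by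
    rw [qFact_Ioc, qFact_Ioc, Finset.prod_Ioc_consecutive _ (by omega) (by omega)]
  have hP : ∏ i ∈ Finset.Ioc s (M + s), qInt q (i : ℤ) ≤ (1 / (1 - q)) ^ M := by
    have h := Finset.prod_le_prod (s := Finset.Ioc s (M + s))
      (f := fun i : ℕ => qInt q (i : ℤ)) (g := fun _ => 1 / (1 - q))
      (fun i hi => (qInt_nat_pos hq0 hq1
        (by have := (mem_Ioc.mp hi).1; omega : 1 ≤ i)).le)
      (fun i _ => qInt_nat_le hq0 hq1 i)
    simpa [Nat.card_Ioc] using h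
  have hPnn : 0 ≤ ∏ i ∈ Finset.Ioc s (M + s), qInt q (i : ℤ) :=
    Finset.prod_nonneg fun i hi => (qInt_nat_pos hq0 hq1
      (by have := (mem_Ioc.mp hi).1; omega : 1 ≤ i)).le
  have hs := qFact_pos hq0 hq1 s
  have hM := qFact_one_le hq0 hq1 M
  rw [hsplit, mul_div_mul_left _ _ hs.ne']
  calc (∏ i ∈ Finset.Ioc s (M + s), qInt q (i : ℤ)) / qFact q M
      ≤ (∏ i ∈ Finset.Ioc s (M + s), qInt q (i : ℤ)) / 1 := by
        apply div_le_div_of_nonneg_left hPnn one_pos hM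
    _ = ∏ i ∈ Finset.Ioc s (M + s), qInt q (i : ℤ) := div_one _
    _ ≤ (1 / (1 - q)) ^ M := hP

lemma qBinom_nonneg (hq0 : 0 < q) (hq1 : q < 1) (a b : ℕ) : 0 ≤ qBinom q a b := by
  have h1 := qFact_pos hq0 hq1 a
  have h2 := qFact_pos hq0 hq1 b
  have h3 := qFact_pos hq0 hq1 (a - b)
  exact div_nonneg h1.le (by positivity)

lemma summable_aux (hq0 : 0 < q) (hq1 : q < 1) (hβ : 0 < β) (hβ' : β < 1) (M : ℕ) :
    Summable (fun s : ℕ => qBinom q (M + s) s * β ^ s) := by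
  apply Summable.of_nonneg_of_le
    (f := fun s : ℕ => (1 / (1 - q)) ^ M * β ^ s)
    (fun s => by have := qBinom_nonneg hq0 hq1 (M + s) s; positivity)
    (fun s => by
      have h1 := qBinom_bound hq0 hq1 M s
      have h2 : (0:ℝ) ≤ β ^ s := by positivity
      exact mul_le_mul_of_nonneg_right h1 h2)
  exact (summable_geometric_of_lt_one hβ.le hβ').mul_left _

lemma ominus_pos (hq0 : 0 < q) (hq1 : q < 1) (hβ : 0 < β) (hβ' : β < 1) (N : ℕ) :
    0 < ominus q β N := by
  apply Finset.prod_pos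
  intro i _
  have h1 : q ^ (i - 1) ≤ 1 := pow_le_one₀ hq0.le hq1.le
  nlinarith

lemma ominus_succ (N : ℕ) : ominus q β (N + 1) = ominus q β N * (1 - β * q ^ N) := by
  rw [ominus, Finset.prod_Icc_succ_top (by omega)]
  simp [ominus]

/-- q-binomial series -/
lemma hasSum_qbinom (hq0 : 0 < q) (hq1 : q < 1) (hβ : 0 < β) (hβ' : β < 1) (M : ℕ) :
    HasSum (fun s : ℕ => qBinom q (M + s) s * β ^ s) (1 / ominus q β (M + 1)) := by
  induction M with
  | zero =>
    have h0 : ∀ s : ℕ, qBinom q (0 + s) s = 1 := by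
      intro s
      rw [qBinom]
      simp [qFact_zero, (qFact_pos hq0 hq1 s).ne']
    have : ominus q β 1 = 1 - β := by simp [ominus]
    simp only [h0, one_mul, this]
    rw [one_div]
    exact hasSum_geometric_of_lt_one hβ.le hβ'
  | succ M ih =>
    set f : ℕ → ℝ := fun s => qBinom q (M + 1 + s) s * β ^ s with hf
    have hsum : Summable f := summable_aux hq0 hq1 hβ hβ' (M + 1)
    set L := ∑' s, f s with hLdef
    have hL : HasSum f L := hsum.hasSum
    have hf0 : f 0 = 1 := by
      simp only [hf, pow_zero, mul_one]
      rw [qBinom]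
      simp [qFact_zero, (qFact_pos hq0 hq1 (M + 1)).ne']
    have hshift : HasSum (fun s => f (s + 1)) (L - 1) := by
      rw [hasSum_nat_add_iff 1]
      simpa [hf0] using hL
    have hrec : ∀ s : ℕ, f (s + 1)
        = q ^ (M + 1) * β * f s + qBinom q (M + (s + 1)) (s + 1) * β ^ (s + 1) := by
      intro s
      simp only [hf]
      rw [show M + 1 + (s + 1) = M + 1 + s + 1 by omega, qBinom_pascal hq0 hq1 M s,
        show M + (s + 1) = M + 1 + s by omega]
      ring
    have h2 : HasSum (fun s => q ^ (M + 1) * β * f s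
        + qBinom q (M + (s + 1)) (s + 1) * β ^ (s + 1))
        (q ^ (M + 1) * β * L + (1 / ominus q β (M + 1) - 1)) := by
      apply HasSum.add (hL.mul_left _)
      have : HasSum (fun s : ℕ => qBinom q (M + (s + 1)) (s + 1) * β ^ (s + 1))
          (1 / ominus q β (M + 1) - 1) := by
        refine (hasSum_nat_add_iff (f := fun t : ℕ => qBinom q (M + t) t * β ^ t) 1).mpr ?_
        have h00 : qBinom q M 0 = 1 := by
          rw [qBinom]; simp [qFact_zero, (qFact_pos hq0 hq1 M).ne']
        simpa [h00] using ih
      exact this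
    have hshift' : HasSum (fun s => q ^ (M + 1) * β * f s
        + qBinom q (M + (s + 1)) (s + 1) * β ^ (s + 1)) (L - 1) :=
      (funext hrec : (fun s => f (s + 1)) = _) ▸ hshift
    have heq : L - 1 = q ^ (M + 1) * β * L + (1 / ominus q β (M + 1) - 1) :=
      HasSum.unique hshift' h2
    have hop : 0 < ominus q β (M + 1) := ominus_pos hq0 hq1 hβ hβ' (M + 1)
    have hq' : q ^ (M + 1) * β < 1 := by
      have h1 : q ^ (M + 1) ≤ 1 := pow_le_one₀ hq0.le hq1.le
      nlinarith
    have hLval : L = 1 / ominus q β (M + 1 + 1) := by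
      rw [ominus_succ]
      have hne : (1 : ℝ) - β * q ^ (M + 1) ≠ 0 := by nlinarith
      have hstep : L * (1 - β * q ^ (M + 1)) = 1 / ominus q β (M + 1) := by
        have : β * q ^ (M + 1) = q ^ (M + 1) * β := mul_comm _ _
        rw [this]; linarith
      rw [eq_div_iff (mul_ne_zero hop.ne' hne), mul_comm (ominus q β (M + 1)),
        ← mul_assoc, hstep]
      field_simp
    exact hLval ▸ hL

lemma qInt_zero : qInt q 0 = 0 := by simp [qInt]

lemma qFall_eq_zero (t m : ℕ) (h : t < m) : qFall q (t : ℤ) m = 0 := by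
  rw [qFall]
  apply Finset.prod_eq_zero (i := t + 1) (by simp [mem_Icc]; omega)
  have : (t : ℤ) - ((t : ℕ) + 1 : ℕ) + 1 = 0 := by push_cast; ring
  rw [show ((t + 1 : ℕ) : ℤ) = ((t : ℤ) + 1) by push_cast; ring]
  rw [show (t : ℤ) - ((t : ℤ) + 1) + 1 = 0 by ring, qInt_zero]

lemma qFall_succ (u : ℤ) (m : ℕ) :
    qFall q u (m + 1) = qFall q u m * qInt q (u - m) := by
  rw [qFall, Finset.prod_Icc_succ_top (by omega), ← qFall]
  congr 2
  push_cast
  ring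

lemma qFall_mul_qFact (hq0 : 0 < q) (hq1 : q < 1) (u m : ℕ) (h : m ≤ u) :
    qFall q (u : ℤ) m * qFact q (u - m) = qFact q u := by
  induction m with
  | zero => simp [qFall]
  | succ m ih =>
    have hm : m ≤ u := by omega
    rw [qFall_succ]
    have e1 : (u : ℤ) - m = ((u - m : ℕ) : ℤ) := by push_cast [hm]; ring
    have e2 : qFact q (u - m) = qFact q (u - m - 1 + 1) := by congr 1; omega
    have e3 : u - (m + 1) = u - m - 1 := by omega
    rw [e1, e3, mul_assoc]
    rw [← ih hm, e2, qFact_succ]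
    have e4 : ((u - m - 1 : ℕ) : ℤ) + 1 = ((u - m : ℕ) : ℤ) := by
      push_cast [hm, show 1 ≤ u - m by omega]; omega
    rw [e4]
    ring

lemma ominus_split (n m : ℕ) :
    ominus q β (n + m) = ominus q β n * ∏ i ∈ Finset.Icc 1 m, (1 - β * q ^ (n + i - 1)) := by
  induction m with
  | zero => simp
  | succ m ih =>
    rw [show n + (m + 1) = (n + m) + 1 by omega, ominus_succ, ih,
      Finset.prod_Icc_succ_top (by omega : 1 ≤ m + 1)]
    have : n + (m + 1) - 1 = n + m := by omega
    rw [this]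
    ring

theorem stmt15 (q : ℝ) (hq0 : 0 < q) (hq1 : q < 1) (n : ℕ) (hn : 1 ≤ n) (β : ℝ)
    (hβ : 0 < β) (hβ' : β < 1) (m : ℕ) :
    HasSum (fun t : ℕ =>
        qFall q (t : ℤ) m * qBinom q (n + t - 1) t * β ^ t * ominus q β n)
      (qFall q ((n : ℤ) + (m : ℤ) - 1) m * β ^ m /
        ∏ i ∈ Finset.Icc 1 m, (1 - β * q ^ (n + i - 1))) := by
  obtain ⟨n', rfl⟩ : ∃ n', n = n' + 1 := ⟨n - 1, by omega⟩
  set f : ℕ → ℝ := fun t =>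
    qFall q (t : ℤ) m * qBinom q (n' + 1 + t - 1) t * β ^ t * ominus q β (n' + 1) with hfdef
  -- f vanishes for t < m
  have hvan : ∀ t < m, f t = 0 := by
    intro t ht
    simp [hfdef, qFall_eq_zero t m ht]
  -- cast of target falling factorial
  have hcast : (((n' + 1 : ℕ) : ℤ) + (m : ℤ) - 1) = ((n' + m : ℕ) : ℤ) := by
    push_cast; ring
  -- key constant
  -- identity for shifted terms
  have hterm : ∀ s : ℕ, f (s + m) = qFall q ((n' + m : ℕ) : ℤ) m * β ^ m * ominus q β (n' + 1) * (qBinom q ((n' + m) + s) s * β ^ s) := by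
    intro s
    have h1 : n' + 1 + (s + m) - 1 = n' + m + s := by omega
    simp only [hfdef, h1]
    -- qFall q (s+m) m = qFact(s+m)/qFact s
    have h2 := qFall_mul_qFact hq0 hq1 (s + m) m (by omega)
    have h3 : s + m - m = s := by omega
    rw [h3] at h2
    have h4 := qFall_mul_qFact hq0 hq1 (n' + m) m (by omega)
    have h5 : n' + m - m = n' := by omega
    rw [h5] at h4
    have hfs := (qFact_pos hq0 hq1 s).ne'
    have hfn' := (qFact_pos hq0 hq1 n').ne'
    have hfnm := (qFact_pos hq0 hq1 (n' + m)).ne'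
    have hfsm := (qFact_pos hq0 hq1 (s + m)).ne'
    rw [qBinom, qBinom, show n' + m + s - s = n' + m by omega,
      show n' + m + s - (s + m) = n' by omega]
    have hQ1 : qFall q ((s + m : ℕ) : ℤ) m = qFact q (s + m) / qFact q s := by
      field_simp [← h2]
      exact h2
    have hQ2 : qFall q ((n' + m : ℕ) : ℤ) m = qFact q (n' + m) / qFact q n' := by
      field_simp [← h4]
      exact h4
    rw [hQ1, hQ2]
    have : ((s : ℤ) + (m : ℤ)) = ((s + m : ℕ) : ℤ) := by push_cast; ring
    field_simp
    ring
  -- the shifted series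
  have hseries := hasSum_qbinom hq0 hq1 hβ hβ' (n' + m)
  have hmul : HasSum (fun s : ℕ => qFall q ((n' + m : ℕ) : ℤ) m * β ^ m * ominus q β (n' + 1) * (qBinom q ((n' + m) + s) s * β ^ s))
      (qFall q ((n' + m : ℕ) : ℤ) m * β ^ m * ominus q β (n' + 1) * (1 / ominus q β (n' + m + 1))) := hseries.mul_left _
  have hshift : HasSum (fun s : ℕ => f (s + m)) (qFall q ((n' + m : ℕ) : ℤ) m * β ^ m * ominus q β (n' + 1) * (1 / ominus q β (n' + m + 1))) :=
    (funext hterm : (fun s => f (s + m)) = _) ▸ hmul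
  have hfull : HasSum f (qFall q ((n' + m : ℕ) : ℤ) m * β ^ m * ominus q β (n' + 1) * (1 / ominus q β (n' + m + 1))) := by
    have := (hasSum_nat_add_iff (f := f) m).mp hshift
    have hz : ∑ i ∈ Finset.range m, f i = 0 :=
      Finset.sum_eq_zero fun i hi => hvan i (Finset.mem_range.mp hi)
    simpa [hz] using this
  -- identify the sum value
  have hop : 0 < ominus q β (n' + 1) := ominus_pos hq0 hq1 hβ hβ' (n' + 1)
  have hprod : 0 < ∏ i ∈ Finset.Icc 1 m, (1 - β * q ^ (n' + 1 + i - 1)) := by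
    apply Finset.prod_pos
    intro i _
    have h1 : q ^ (n' + 1 + i - 1) ≤ 1 := pow_le_one₀ hq0.le hq1.le
    nlinarith
  have hval : qFall q ((n' + m : ℕ) : ℤ) m * β ^ m * ominus q β (n' + 1) * (1 / ominus q β (n' + m + 1))
      = qFall q (((n' + 1 : ℕ) : ℤ) + (m : ℤ) - 1) m * β ^ m /
        ∏ i ∈ Finset.Icc 1 m, (1 - β * q ^ (n' + 1 + i - 1)) := by
    rw [hcast]
    have hsplit : ominus q β (n' + m + 1)
        = ominus q β (n' + 1) * ∏ i ∈ Finset.Icc 1 m, (1 - β * q ^ (n' + 1 + i - 1)) := by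
      rw [show n' + m + 1 = (n' + 1) + m by omega]
      exact ominus_split (n' + 1) m
    rw [hsplit, mul_one_div,
      mul_comm (qFall q ((n' + m : ℕ) : ℤ) m * β ^ m) (ominus q β (n' + 1)),
      mul_div_mul_left _ _ hop.ne']
  rw [← hval]
  exact hfull
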